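/- Let μ : ℂ^{n+1} → ℝⁿ be the map μ([z]) defined on ℂℙⁿ in homogeneous coordinates by μ([z₀,…,zₙ]) = (−π/∑ᵢ|zᵢ|²) · (∑_{j≥1} C_{j1}|z_j|², …, ∑_{j≥1} C_{jn}|z_j|²) + t for a fixed matrix C ∈ GL(n,ℝ) and constant t ∈ ℝⁿ. Then the image μ(ℂℙⁿ) equals the image of the standard n-simplex {x ∈ ℝⁿ : xₖ ≥ 0, ∑ₖ xₖ ≤ 1} under the affine map x ↦ −π Cᵀ x + t; in particular it is a convex polytope in ℝⁿ. -/
import Mathlib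


/-- The image of the moment map `μ([z₀,…,zₙ]) = (−π/∑|zᵢ|²)·(∑_{j≥1} C_{jk}|z_j|²)ₖ + t` on
`ℂℙⁿ` (computed on nonzero homogeneous coordinate vectors) equals the image of the standard
`n`-simplex under the affine map `x ↦ −π Cᵀ x + t`; in particular it is convex. -/
theorem stmt16 {n : ℕ} (C : Matrix (Fin n) (Fin n) ℝ) (hC : IsUnit C.det)
    (t : Fin n → ℝ) :
    ((fun z : Fin (n + 1) → ℂ => fun k : Fin n =>
        (-Real.pi / ∑ i, ‖z i‖ ^ 2) * (∑ j : Fin n, C j k * ‖z j.succ‖ ^ 2) + t k) ''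
      {z | z ≠ 0}
    = (fun x : Fin n → ℝ => fun k : Fin n => -Real.pi * (C.transpose.mulVec x) k + t k) ''
      {x | (∀ k, 0 ≤ x k) ∧ ∑ k, x k ≤ 1}) ∧
    Convex ℝ
      ((fun z : Fin (n + 1) → ℂ => fun k : Fin n =>
        (-Real.pi / ∑ i, ‖z i‖ ^ 2) * (∑ j : Fin n, C j k * ‖z j.succ‖ ^ 2) + t k) ''
      {z | z ≠ 0}) := by
  have key : ((fun z : Fin (n + 1) → ℂ => fun k : Fin n =>
        (-Real.pi / ∑ i, ‖z i‖ ^ 2) * (∑ j : Fin n, C j k * ‖z j.succ‖ ^ 2) + t k) ''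
      {z | z ≠ 0}
    = (fun x : Fin n → ℝ => fun k : Fin n => -Real.pi * (C.transpose.mulVec x) k + t k) ''
      {x | (∀ k, 0 ≤ x k) ∧ ∑ k, x k ≤ 1}) := by
    ext y
    constructor
    · rintro ⟨z, hz, rfl⟩
      have hz' : ∃ i, z i ≠ 0 := by
        by_contra h
        push_neg at h
        exact hz (funext h)
      obtain ⟨i, hi⟩ := hz'
      have hS : 0 < ∑ i, ‖z i‖ ^ 2 := by
        apply Finset.sum_pos' (fun j _ => by positivity)
        exact ⟨i, Finset.mem_univ i, pow_pos (norm_pos_iff.mpr hi) 2⟩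
      refine ⟨fun j => ‖z j.succ‖ ^ 2 / ∑ i, ‖z i‖ ^ 2, ⟨fun k => by positivity, ?_⟩, ?_⟩
      · rw [← Finset.sum_div, div_le_one hS, Fin.sum_univ_succ]
        have : (0:ℝ) ≤ ‖z 0‖ ^ 2 := by positivity
        linarith
      · funext k
        simp only [Matrix.mulVec, dotProduct, Matrix.transpose_apply]
        congr 1
        rw [Finset.mul_sum, Finset.mul_sum]
        refine Finset.sum_congr rfl fun j _ => ?_
        field_simp
    · rintro ⟨x, ⟨hx0, hx1⟩, rfl⟩
      refine ⟨fun i => Fin.cases ((Real.sqrt (1 - ∑ k, x k) : ℝ) : ℂ)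
          (fun j => ((Real.sqrt (x j) : ℝ) : ℂ)) i, ?_, ?_⟩
      · intro h
        have h0 := congrFun h 0
        have h1 : ∀ j : Fin n, Real.sqrt (x j) = 0 := by
          intro j
          have := congrFun h j.succ
          simpa using this
        have hx0' : ∀ j, x j = 0 := fun j => by
          have := h1 j
          nlinarith [Real.sq_sqrt (hx0 j), Real.sqrt_nonneg (x j)]
        have : Real.sqrt (1 - ∑ k, x k) = 0 := by simpa using h0
        have hsum : ∑ k, x k = 0 := Finset.sum_eq_zero fun j _ => hx0' j
        rw [hsum, sub_zero, Real.sqrt_one] at this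
        norm_num at this
      · have hnorm : ∀ i : Fin (n + 1),
            ‖(Fin.cases ((Real.sqrt (1 - ∑ k, x k) : ℝ) : ℂ)
              (fun j => ((Real.sqrt (x j) : ℝ) : ℂ)) i : ℂ)‖ ^ 2
            = Fin.cases (1 - ∑ k, x k) (fun j => x j) i := by
          intro i
          induction i using Fin.cases with
          | zero =>
            simp [Complex.norm_real, sq_abs, Real.sq_sqrt (by linarith : (0:ℝ) ≤ 1 - ∑ k, x k)]
          | succ j =>
            simp [Complex.norm_real, sq_abs, Real.sq_sqrt (hx0 j)]
        have hsum1 : (∑ i : Fin (n+1),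
            ‖(Fin.cases ((Real.sqrt (1 - ∑ k, x k) : ℝ) : ℂ)
              (fun j => ((Real.sqrt (x j) : ℝ) : ℂ)) i : ℂ)‖ ^ 2) = 1 := by
          rw [Finset.sum_congr rfl fun i _ => hnorm i, Fin.sum_univ_succ]
          simp
        funext k
        beta_reduce
        rw [hsum1]
        simp only [Matrix.mulVec, dotProduct, Matrix.transpose_apply]
        congr 1
        rw [div_one, Finset.mul_sum, Finset.mul_sum]
        refine Finset.sum_congr rfl fun j _ => ?_
        rw [hnorm j.succ, Fin.cases_succ]
  refine ⟨key, ?_⟩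
  rw [key]
  rintro p ⟨x, ⟨hx0, hx1⟩, rfl⟩ q ⟨u, ⟨hu0, hu1⟩, rfl⟩ a b ha hb hab
  refine ⟨a • x + b • u, ⟨fun k => by
      have := hx0 k; have := hu0 k
      simp only [Pi.add_apply, Pi.smul_apply, smul_eq_mul]
      positivity, ?_⟩, ?_⟩
  · simp only [Pi.add_apply, Pi.smul_apply, smul_eq_mul]
    rw [Finset.sum_add_distrib, ← Finset.mul_sum, ← Finset.mul_sum]
    nlinarith
  · funext k
    simp only [Pi.add_apply, Pi.smul_apply, smul_eq_mul, Matrix.mulVec_add,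
      Matrix.mulVec_smul]
    linear_combination (-(t k)) * hab
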